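/- Let n ≥ 1 be an integer and r < 0 a real number. The set L_r of all real (n+2)×(n+2) block matrices (block sizes 1, n, 1) of the form [[0, rXᵗ, 0],[X, A, −rX],[0, −Xᵗ, 0]] with X ∈ ℝⁿ (a column vector) and A ∈ so(n) is a Lie subalgebra of M_{n+2}(ℝ) under the commutator, and L_r is isomorphic as a real Lie algebra to so(n+1). -/

import Mathlib

open Matrix

attribute [local instance 100] LieRing.ofAssociativeRing

/-- The block matrix (block sizes `1, n, 1`)
`[[0, rXᵗ, 0],[X, A, −rX],[0, −Xᵗ, 0]]` with `X ∈ ℝⁿ`, `A ∈ M_n(ℝ)`. -/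
def Lmat {n : ℕ} (r : ℝ) (X : Fin n → ℝ) (A : Matrix (Fin n) (Fin n) ℝ) :
    Matrix ((Fin 1 ⊕ Fin n) ⊕ Fin 1) ((Fin 1 ⊕ Fin n) ⊕ Fin 1) ℝ :=
  fromBlocks
    (fromBlocks 0 (Matrix.of fun _ j => r * X j) (Matrix.of fun i _ => X i) A)
    (Matrix.of fun i _ => Sum.elim (fun _ => (0 : ℝ)) (fun i' => -r * X i') i)
    (Matrix.of fun _ j => Sum.elim (fun _ => (0 : ℝ)) (fun j' => -X j') j)
    0

variable {n : ℕ} {r : ℝ}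

lemma skew_entry {A : Matrix (Fin n) (Fin n) ℝ} (hA : Aᵀ = -A) (i j : Fin n) :
    A i j = -A j i := by
  have := congrFun (congrFun hA j) i
  simpa [Matrix.transpose_apply] using this

lemma Lmat_add (X Y : Fin n → ℝ) (A B : Matrix (Fin n) (Fin n) ℝ) :
    Lmat r (X + Y) (A + B) = Lmat r X A + Lmat r Y B := by
  ext i j
  rcases i with (i|i)|i <;> rcases j with (j|j)|j <;>
    simp [Lmat, mul_add] <;> try ring

lemma Lmat_smul (t : ℝ) (X : Fin n → ℝ) (A : Matrix (Fin n) (Fin n) ℝ) :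
    Lmat r (t • X) (t • A) = t • Lmat r X A := by
  ext i j
  rcases i with (i|i)|i <;> rcases j with (j|j)|j <;>
    simp [Lmat, mul_comm, mul_left_comm]

lemma Lmat_zero : Lmat (n := n) r 0 0 = 0 := by
  ext i j
  rcases i with (i|i)|i <;> rcases j with (j|j)|j <;> simp [Lmat]

lemma sum_skew_aux {A : Matrix (Fin n) (Fin n) ℝ} (hA : Aᵀ = -A) (v : Fin n → ℝ) (c : ℝ)
    (j : Fin n) : ∑ x, c * v x * A x j = -∑ x, c * (A j x * v x) := by
  rw [← Finset.sum_neg_distrib]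
  exact Finset.sum_congr rfl fun k _ => by rw [skew_entry hA k j]; ring

lemma sum_skew_aux' {A : Matrix (Fin n) (Fin n) ℝ} (hA : Aᵀ = -A) (v : Fin n → ℝ)
    (j : Fin n) : ∑ x, v x * A x j = -∑ x, A j x * v x := by
  rw [← Finset.sum_neg_distrib]
  exact Finset.sum_congr rfl fun k _ => by rw [skew_entry hA k j]; ring

lemma Lmat_bracket (X Y : Fin n → ℝ) (A B : Matrix (Fin n) (Fin n) ℝ)
    (hA : Aᵀ = -A) (hB : Bᵀ = -B) :
    ⁅Lmat r X A, Lmat r Y B⁆ =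
      Lmat r (A *ᵥ Y - B *ᵥ X)
        (⁅A, B⁆ + (2 * r) • (vecMulVec X Y - vecMulVec Y X)) := by
  ext i j
  rcases i with (i|i)|i <;> rcases j with (j|j)|j <;>
    simp [Lmat, Ring.lie_def, Matrix.mul_apply, Fintype.sum_sum_type,
      Matrix.sub_apply, mulVec, dotProduct, vecMulVec, Finset.sum_sub_distrib,
      Finset.mul_sum, Finset.sum_mul, mul_sub, sub_mul]
  case inl.inl.inl.inr =>
    rw [sum_skew_aux hB X r j, sum_skew_aux hA Y r j]; ring
  case inr.inl.inr =>
    rw [sum_skew_aux' hB X j, sum_skew_aux' hA Y j]; ring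
  all_goals (simp [mul_comm, mul_left_comm, mul_assoc]; try ring)

lemma skew_entry' {ι : Type*} {A : Matrix ι ι ℝ} (hA : Aᵀ = -A) (i j : ι) :
    A i j = -A j i := by
  have := congrFun (congrFun hA j) i
  simpa [Matrix.transpose_apply] using this

def Nmat (X : Fin n → ℝ) (A : Matrix (Fin n) (Fin n) ℝ) :
    Matrix (Fin n ⊕ Fin 1) (Fin n ⊕ Fin 1) ℝ :=
  fromBlocks A (Matrix.of fun i _ => X i) (Matrix.of fun _ j => -X j) 0

def Pmat (X : Fin n → ℝ) (A : Matrix (Fin n) (Fin n) ℝ) :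
    Matrix (Fin (n+1)) (Fin (n+1)) ℝ :=
  (Nmat X A).submatrix finSumFinEquiv.symm finSumFinEquiv.symm

lemma Pmat_eq (X : Fin n → ℝ) (A : Matrix (Fin n) (Fin n) ℝ) :
    Pmat X A = Matrix.reindexLieEquiv (R := ℝ) finSumFinEquiv (Nmat X A) := rfl

lemma Nmat_bracket (X Y : Fin n → ℝ) (A B : Matrix (Fin n) (Fin n) ℝ)
    (hA : Aᵀ = -A) (hB : Bᵀ = -B) :
    ⁅Nmat X A, Nmat Y B⁆ =
      Nmat (A *ᵥ Y - B *ᵥ X) (⁅A, B⁆ - (vecMulVec X Y - vecMulVec Y X)) := by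
  ext i j
  rcases i with i|i <;> rcases j with j|j <;>
    simp [Nmat, Ring.lie_def, Matrix.mul_apply, Fintype.sum_sum_type,
      Matrix.sub_apply, mulVec, dotProduct, vecMulVec, Finset.sum_sub_distrib,
      Finset.mul_sum, Finset.sum_mul, mul_sub, sub_mul]
  all_goals try (rw [sum_skew_aux' hB X _, sum_skew_aux' hA Y _]; ring)
  all_goals (simp [mul_comm, mul_left_comm, mul_assoc]; try ring)

lemma Pmat_bracket (X Y : Fin n → ℝ) (A B : Matrix (Fin n) (Fin n) ℝ)
    (hA : Aᵀ = -A) (hB : Bᵀ = -B) :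
    ⁅Pmat X A, Pmat Y B⁆ =
      Pmat (A *ᵥ Y - B *ᵥ X) (⁅A, B⁆ - (vecMulVec X Y - vecMulVec Y X)) := by
  have h := Nmat_bracket X Y A B hA hB
  rw [Ring.lie_def] at h ⊢
  unfold Pmat
  rw [submatrix_mul_equiv, submatrix_mul_equiv]
  ext i j
  have h2 := congrFun (congrFun h (finSumFinEquiv.symm i)) (finSumFinEquiv.symm j)
  simpa using h2

lemma Nmat_skew {X : Fin n → ℝ} {A : Matrix (Fin n) (Fin n) ℝ} (hA : Aᵀ = -A) :
    (Nmat X A)ᵀ = -Nmat X A := by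
  ext i j
  rcases i with i|i <;> rcases j with j|j
  · simpa [Nmat] using skew_entry' hA j i
  all_goals simp [Nmat]

lemma Pmat_skew {X : Fin n → ℝ} {A : Matrix (Fin n) (Fin n) ℝ} (hA : Aᵀ = -A) :
    (Pmat X A)ᵀ = -Pmat X A := by
  rw [Pmat, transpose_submatrix, Nmat_skew hA]
  rfl

lemma Pmat_add (X Y : Fin n → ℝ) (A B : Matrix (Fin n) (Fin n) ℝ) :
    Pmat (X + Y) (A + B) = Pmat X A + Pmat Y B := by
  ext i j
  simp only [Pmat, Nmat, submatrix_apply, Matrix.add_apply]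
  rcases finSumFinEquiv.symm i with i'|i' <;> rcases finSumFinEquiv.symm j with j'|j' <;>
    (simp; try ring)

lemma Pmat_smul (t : ℝ) (X : Fin n → ℝ) (A : Matrix (Fin n) (Fin n) ℝ) :
    Pmat (t • X) (t • A) = t • Pmat X A := by
  ext i j
  simp only [Pmat, Nmat, submatrix_apply, Matrix.smul_apply]
  rcases finSumFinEquiv.symm i with i'|i' <;> rcases finSumFinEquiv.symm j with j'|j' <;>
    simp [mul_comm]

def xOf (M : Matrix ((Fin 1 ⊕ Fin n) ⊕ Fin 1) ((Fin 1 ⊕ Fin n) ⊕ Fin 1) ℝ) : Fin n → ℝ :=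
  fun i => M (Sum.inl (Sum.inr i)) (Sum.inl (Sum.inl 0))

def aOf (M : Matrix ((Fin 1 ⊕ Fin n) ⊕ Fin 1) ((Fin 1 ⊕ Fin n) ⊕ Fin 1) ℝ) :
    Matrix (Fin n) (Fin n) ℝ :=
  Matrix.of fun i j => M (Sum.inl (Sum.inr i)) (Sum.inl (Sum.inr j))

lemma xOf_Lmat (X : Fin n → ℝ) (A : Matrix (Fin n) (Fin n) ℝ) : xOf (Lmat r X A) = X := by
  ext i; simp [xOf, Lmat]

lemma aOf_Lmat (X : Fin n → ℝ) (A : Matrix (Fin n) (Fin n) ℝ) : aOf (Lmat r X A) = A := by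
  ext i j; simp [aOf, Lmat]

def yOf (M : Matrix (Fin (n+1)) (Fin (n+1)) ℝ) : Fin n → ℝ :=
  fun i => M (finSumFinEquiv (Sum.inl i)) (finSumFinEquiv (Sum.inr 0))

def bOf (M : Matrix (Fin (n+1)) (Fin (n+1)) ℝ) : Matrix (Fin n) (Fin n) ℝ :=
  Matrix.of fun i j => M (finSumFinEquiv (Sum.inl i)) (finSumFinEquiv (Sum.inl j))

lemma yOf_Pmat (X : Fin n → ℝ) (A : Matrix (Fin n) (Fin n) ℝ) : yOf (Pmat X A) = X := by
  ext i; simp [yOf, Pmat, Nmat]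

lemma bOf_Pmat (X : Fin n → ℝ) (A : Matrix (Fin n) (Fin n) ℝ) : bOf (Pmat X A) = A := by
  ext i j; simp [bOf, Pmat, Nmat]

lemma bOf_skew {M : Matrix (Fin (n+1)) (Fin (n+1)) ℝ} (hM : Mᵀ = -M) :
    (bOf M)ᵀ = -bOf M := by
  ext i j
  simp only [bOf, Matrix.transpose_apply, Matrix.of_apply, Matrix.neg_apply]
  exact skew_entry' hM _ _

lemma Pmat_repr {M : Matrix (Fin (n+1)) (Fin (n+1)) ℝ} (hM : Mᵀ = -M) :
    M = Pmat (yOf M) (bOf M) := by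
  ext i j
  obtain ⟨i', rfl⟩ := finSumFinEquiv.surjective i
  obtain ⟨j', rfl⟩ := finSumFinEquiv.surjective j
  rcases i' with i'|i' <;> rcases j' with j'|j'
  · simp [Pmat, Nmat, bOf]
  · rw [Subsingleton.elim j' 0]; simp [Pmat, Nmat, yOf]
  · rw [Subsingleton.elim i' 0]
    simp only [Pmat, Nmat, submatrix_apply, Equiv.symm_apply_apply, fromBlocks_apply₂₁,
      of_apply]
    rw [skew_entry' hM (finSumFinEquiv (Sum.inr 0)) (finSumFinEquiv (Sum.inl j'))]
    rfl
  · rw [Subsingleton.elim i' 0, Subsingleton.elim j' 0]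
    have := skew_entry' hM (finSumFinEquiv (Sum.inr (0 : Fin 1)))
      (finSumFinEquiv (Sum.inr (0 : Fin 1)))
    simp only [Pmat, Nmat, submatrix_apply, Equiv.symm_apply_apply, fromBlocks_apply₂₂,
      Matrix.zero_apply]
    linarith

lemma mem_skew_iff {m : ℕ} (M : Matrix (Fin m) (Fin m) ℝ) :
    M ∈ skewAdjointMatricesLieSubalgebra (1 : Matrix (Fin m) (Fin m) ℝ) ↔ Mᵀ = -M := by
  rw [mem_skewAdjointMatricesLieSubalgebra, mem_skewAdjointMatricesSubmodule]
  simp [Matrix.IsSkewAdjoint, Matrix.IsAdjointPair]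

def Sr (n : ℕ) (r : ℝ) :
    LieSubalgebra ℝ (Matrix ((Fin 1 ⊕ Fin n) ⊕ Fin 1) ((Fin 1 ⊕ Fin n) ⊕ Fin 1) ℝ) where
  carrier := {M | ∃ (X : Fin n → ℝ) (A : Matrix (Fin n) (Fin n) ℝ), Aᵀ = -A ∧ M = Lmat r X A}
  zero_mem' := ⟨0, 0, by simp, Lmat_zero.symm⟩
  add_mem' := by
    rintro a b ⟨X, A, hA, rfl⟩ ⟨Y, B, hB, rfl⟩
    exact ⟨X + Y, A + B, by rw [transpose_add, hA, hB, neg_add], (Lmat_add X Y A B).symm⟩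
  smul_mem' := by
    rintro t a ⟨X, A, hA, rfl⟩
    exact ⟨t • X, t • A, by rw [transpose_smul, hA, smul_neg], (Lmat_smul t X A).symm⟩
  lie_mem' := by
    rintro a b ⟨X, A, hA, rfl⟩ ⟨Y, B, hB, rfl⟩
    refine ⟨A *ᵥ Y - B *ᵥ X, ⁅A, B⁆ + (2 * r) • (vecMulVec X Y - vecMulVec Y X), ?_,
      Lmat_bracket X Y A B hA hB⟩
    have hV : (vecMulVec X Y - vecMulVec Y X)ᵀ = -(vecMulVec X Y - vecMulVec Y X) := by
      ext i j
      simp [vecMulVec_apply, mul_comm]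
    rw [transpose_add, transpose_smul, Matrix.lie_transpose, hA, hB, hV, smul_neg]
    rw [show ⁅-B, -A⁆ = -⁅A, B⁆ by rw [neg_lie, lie_neg, neg_neg, ← lie_skew]]
    abel

set_option maxHeartbeats 2000000 in
noncomputable def Eqv (n : ℕ) (r : ℝ) (hr : r < 0) :
    (Sr n r) ≃ₗ⁅ℝ⁆ skewAdjointMatricesLieSubalgebra (1 : Matrix (Fin (n+1)) (Fin (n+1)) ℝ) :=
  letI s : ℝ := Real.sqrt (-(2 * r))
  haveI hs2 : s ^ 2 = -(2 * r) := Real.sq_sqrt (by linarith)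
  haveI hs0 : s ≠ 0 := by
    intro h
    rw [h] at hs2
    simp at hs2
    linarith
  { toFun := fun M => ⟨Pmat (s • xOf M.1) (aOf M.1), by
      rw [mem_skew_iff]
      obtain ⟨X, A, hA, hM⟩ := M.2
      rw [hM, xOf_Lmat, aOf_Lmat]
      exact Pmat_skew hA⟩
    map_add' := by
      rintro ⟨a, ha⟩ ⟨b, hb⟩
      apply Subtype.ext
      have hx : xOf (a + b) = xOf a + xOf b := rfl
      have hA : aOf (a + b) = aOf a + aOf b := rfl
      show Pmat (s • xOf (a + b)) (aOf (a + b)) = _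
      rw [hx, hA, smul_add, Pmat_add]
      rfl
    map_smul' := by
      rintro t ⟨a, ha⟩
      apply Subtype.ext
      have hx : xOf (t • a) = t • xOf a := rfl
      have hA : aOf (t • a) = t • aOf a := rfl
      show Pmat (s • xOf (t • a)) (aOf (t • a)) = _
      rw [hx, hA, smul_comm s t, Pmat_smul]
      rfl
    map_lie' := by
      rintro ⟨a, ha⟩ ⟨b, hb⟩
      apply Subtype.ext
      obtain ⟨X, A, hA, rfl⟩ := ha
      obtain ⟨Y, B, hB, rfl⟩ := hb
      show Pmat (s • xOf ⁅Lmat r X A, Lmat r Y B⁆) (aOf ⁅Lmat r X A, Lmat r Y B⁆) =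
        ⁅Pmat (s • xOf (Lmat r X A)) (aOf (Lmat r X A)),
         Pmat (s • xOf (Lmat r Y B)) (aOf (Lmat r Y B))⁆
      rw [Lmat_bracket X Y A B hA hB, xOf_Lmat, aOf_Lmat, xOf_Lmat, aOf_Lmat, xOf_Lmat,
        aOf_Lmat, Pmat_bracket _ _ _ _ hA hB]
      have hZ : s • (A *ᵥ Y - B *ᵥ X) = A *ᵥ (s • Y) - B *ᵥ (s • X) := by
        rw [Matrix.mulVec_smul, Matrix.mulVec_smul, smul_sub]
      have hC : ⁅A, B⁆ + (2 * r) • (vecMulVec X Y - vecMulVec Y X) =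
          ⁅A, B⁆ - (vecMulVec (s • X) (s • Y) - vecMulVec (s • Y) (s • X)) := by
        have h2 : s * s = -(2 * r) := by rw [← hs2]; ring
        ext i j
        simp only [Matrix.add_apply, Matrix.sub_apply, Matrix.smul_apply, vecMulVec_apply,
          Pi.smul_apply, smul_eq_mul]
        linear_combination (X i * Y j - Y i * X j) * h2
      rw [hZ, hC]
    invFun := fun M => ⟨Lmat r (s⁻¹ • yOf M.1) (bOf M.1),
      s⁻¹ • yOf M.1, bOf M.1, bOf_skew ((mem_skew_iff M.1).1 M.2), rfl⟩
    left_inv := by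
      rintro ⟨a, ha⟩
      apply Subtype.ext
      obtain ⟨X, A, hA, rfl⟩ := ha
      show Lmat r (s⁻¹ • yOf (Pmat (s • xOf (Lmat r X A)) (aOf (Lmat r X A))))
          (bOf (Pmat (s • xOf (Lmat r X A)) (aOf (Lmat r X A)))) = Lmat r X A
      rw [xOf_Lmat, aOf_Lmat, yOf_Pmat, bOf_Pmat, smul_smul, inv_mul_cancel₀ hs0, one_smul]
    right_inv := by
      rintro ⟨a, ha⟩
      apply Subtype.ext
      have hskew := (mem_skew_iff a).1 ha
      show Pmat (s • xOf (Lmat r (s⁻¹ • yOf a) (bOf a))) (aOf (Lmat r (s⁻¹ • yOf a) (bOf a))) = a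
      rw [xOf_Lmat, aOf_Lmat, smul_smul, mul_inv_cancel₀ hs0, one_smul]
      exact (Pmat_repr hskew).symm }


/-- **For `r < 0`, the matrices `[[0, rXᵗ, 0],[X, A, −rX],[0, −Xᵗ, 0]]` with `X ∈ ℝⁿ`
and `A ∈ so(n)` form a Lie subalgebra of `M_{n+2}(ℝ)` (under the commutator)
isomorphic to `so(n+1)`.** -/
theorem Lmat_lie_subalgebra_iso_so (n : ℕ) (hn : 1 ≤ n) (r : ℝ) (hr : r < 0) :
    ∃ S : LieSubalgebra ℝ (Matrix ((Fin 1 ⊕ Fin n) ⊕ Fin 1) ((Fin 1 ⊕ Fin n) ⊕ Fin 1) ℝ),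
      (S : Set (Matrix ((Fin 1 ⊕ Fin n) ⊕ Fin 1) ((Fin 1 ⊕ Fin n) ⊕ Fin 1) ℝ)) =
        {M | ∃ (X : Fin n → ℝ) (A : Matrix (Fin n) (Fin n) ℝ), Aᵀ = -A ∧ M = Lmat r X A} ∧
      Nonempty
        (S ≃ₗ⁅ℝ⁆ skewAdjointMatricesLieSubalgebra (1 : Matrix (Fin (n+1)) (Fin (n+1)) ℝ)) := by
  exact ⟨Sr n r, rfl, ⟨Eqv n r hr⟩⟩
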